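/- Let a, b, c : ℝ² → ℝ be continuously differentiable functions of (x,t) with a never zero, satisfying a_t = b_x, b_t = c_x and c_t = (bc/a)_x. Then the function R = c/a satisfies R_t = (b/a)·R_x. That is, c/a is a Riemann invariant of the system with characteristic velocity b/a. -/

import Mathlib

lemma fderiv_div_apply' (f g : ℝ × ℝ → ℝ) (p v : ℝ × ℝ)
    (hf : DifferentiableAt ℝ f p) (hg : DifferentiableAt ℝ g p) (h0 : g p ≠ 0) :
    fderiv ℝ (fun q => f q / g q) p v =
      (fderiv ℝ f p v * g p - f p * fderiv ℝ g p v) / (g p) ^ 2 := by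
  have hinv : HasFDerivAt (fun q => (g q)⁻¹) ((-((g p) ^ 2)⁻¹) • fderiv ℝ g p) p :=
    (hasDerivAt_inv h0).comp_hasFDerivAt p hg.hasFDerivAt
  have hmul := hf.hasFDerivAt.mul hinv
  have h2 : fderiv ℝ (fun q => f q / g q) p =
      f p • ((-((g p) ^ 2)⁻¹) • fderiv ℝ g p) + (g p)⁻¹ • fderiv ℝ f p := by
    simp only [div_eq_mul_inv]
    exact hmul.fderiv
  rw [h2]
  simp only [ContinuousLinearMap.add_apply, ContinuousLinearMap.smul_apply, smul_eq_mul]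
  field_simp
  ring

theorem riemann_invariant_eq3 (a b c : ℝ × ℝ → ℝ)
    (ha : ContDiff ℝ 1 a) (hb : ContDiff ℝ 1 b) (hc : ContDiff ℝ 1 c)
    (ha0 : ∀ p, a p ≠ 0)
    (hsys1 : ∀ p, fderiv ℝ a p (0, 1) = fderiv ℝ b p (1, 0))
    (hsys2 : ∀ p, fderiv ℝ b p (0, 1) = fderiv ℝ c p (1, 0))
    (hsys3 : ∀ p, fderiv ℝ c p (0, 1) =
        fderiv ℝ (fun q => b q * c q / a q) p (1, 0)) :
    ∀ p, fderiv ℝ (fun q => c q / a q) p (0, 1) =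
      (b p / a p) * fderiv ℝ (fun q => c q / a q) p (1, 0) := by
  intro p
  have hda : DifferentiableAt ℝ a p := ha.differentiable one_ne_zero p
  have hdb : DifferentiableAt ℝ b p := hb.differentiable one_ne_zero p
  have hdc : DifferentiableAt ℝ c p := hc.differentiable one_ne_zero p
  have hdbc : DifferentiableAt ℝ (fun q => b q * c q) p := hdb.mul hdc
  set A := a p with hA
  set B := b p with hB
  set C := c p with hC
  set Ax := fderiv ℝ a p (1, 0) with hAx
  set Bx := fderiv ℝ b p (1, 0) with hBx
  set Cx := fderiv ℝ c p (1, 0) with hCx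
  have hAne : A ≠ 0 := ha0 p
  -- time derivatives in terms of space derivatives
  have hAt : fderiv ℝ a p (0, 1) = Bx := hsys1 p
  have hbcx : fderiv ℝ (fun q => b q * c q) p (1, 0) = B * Cx + C * Bx := by
    rw [fderiv_fun_mul hdb hdc]
    simp [hB, hC, hBx, hCx]
  have hCt : fderiv ℝ c p (0, 1) = ((B * Cx + C * Bx) * A - B * C * Ax) / A ^ 2 := by
    rw [hsys3 p, fderiv_div_apply' _ _ _ _ hdbc hda hAne, hbcx]
  rw [fderiv_div_apply' _ _ _ _ hdc hda hAne, fderiv_div_apply' _ _ _ _ hdc hda hAne,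
    hCt, hAt]
  field_simp
  ring
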